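/- Let F be a field of characteristic p > 2, R = F[h, c] the polynomial algebra in two commuting variables, and φ the F-algebra automorphism of R determined by φ(h) = h − 1 and φ(c) = c. Then the φ-fixed subalgebra {r ∈ R : φ(r) = r} equals the F-subalgebra of R generated by c and h^p − h, and every ideal J of R with φ(J) ⊆ J is generated, as an ideal of R, by its set of φ-fixed elements {f ∈ J : φ(f) = f}. -/

import Mathlib

open Polynomial in
private lemma psi_apply_eq {A : Type*} [CommRing A]
    (ψ : Polynomial A →+* Polynomial A)
    (hX : ψ X = X - 1) (hC : ∀ a : A, ψ (C a) = C a) (r : Polynomial A) :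
    ψ r = ∑ i ∈ Finset.range (r.natDegree + 1), C (r.coeff i) * (X - 1) ^ i := by
  conv_lhs => rw [r.as_sum_range]
  rw [map_sum]
  refine Finset.sum_congr rfl fun i _ => ?_
  rw [← C_mul_X_pow_eq_monomial, map_mul, map_pow, hX, hC]

open Polynomial in
private lemma psi_natDegree_le {A : Type*} [CommRing A] [IsDomain A]
    (ψ : Polynomial A →+* Polynomial A)
    (hX : ψ X = X - 1) (hC : ∀ a : A, ψ (C a) = C a) (r : Polynomial A) :
    (ψ r).natDegree ≤ r.natDegree := by
  rw [psi_apply_eq ψ hX hC]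
  refine natDegree_sum_le_of_forall_le _ _ fun i hi => ?_
  calc (C (r.coeff i) * (X - 1) ^ i).natDegree ≤ ((X - 1 : Polynomial A) ^ i).natDegree :=
        natDegree_C_mul_le _ _
    _ = i := by
        rw [natDegree_pow]
        have : (X - 1 : Polynomial A) = X - C 1 := by rw [map_one]
        rw [this, natDegree_X_sub_C, mul_one]
    _ ≤ r.natDegree := by
        have := Finset.mem_range.mp hi; omega

open Polynomial in
private lemma coeff_X_sub_one_pow (A : Type*) [CommRing A] (n k : ℕ) :
    ((X - 1 : Polynomial A) ^ n).coeff k = (-1 : A) ^ (n - k) * (n.choose k : A) := by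
  have : (X - 1 : Polynomial A) = X + C (-1) := by rw [map_neg, map_one]; ring
  rw [this, coeff_X_add_C_pow]

open Polynomial in
private lemma fixed_small_natDegree {A : Type*} [CommRing A] [IsDomain A]
    {p : ℕ} [Fact p.Prime] [CharP A p]
    (ψ : Polynomial A →+* Polynomial A)
    (hX : ψ X = X - 1) (hC : ∀ a : A, ψ (C a) = C a)
    (r : Polynomial A) (hfix : ψ r = r) (hdeg : r.natDegree < p) :
    r.natDegree = 0 := by
  by_contra h0
  obtain ⟨m, hm⟩ : ∃ m, r.natDegree = m + 1 := ⟨r.natDegree - 1, by omega⟩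
  have hcoeff : (ψ r).coeff m = r.coeff m := by rw [hfix]
  rw [psi_apply_eq ψ hX hC, finset_sum_coeff, hm] at hcoeff
  have hsum : ∀ i ∈ Finset.range (m + 1 + 1),
      (C (r.coeff i) * (X - 1) ^ i).coeff m
        = r.coeff i * ((-1 : A) ^ (i - m) * (i.choose m : A)) := by
    intro i _
    rw [coeff_C_mul, coeff_X_sub_one_pow]
  rw [Finset.sum_congr rfl hsum] at hcoeff
  rw [Finset.sum_range_succ, Finset.sum_range_succ] at hcoeff
  have hz : ∀ i ∈ Finset.range m,
      r.coeff i * ((-1 : A) ^ (i - m) * (i.choose m : A)) = 0 := by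
    intro i hi
    rw [Nat.choose_eq_zero_of_lt (Finset.mem_range.mp hi)]
    simp
  rw [Finset.sum_eq_zero hz, zero_add, Nat.sub_self, pow_zero, Nat.choose_self] at hcoeff
  have hlead : r.coeff (m + 1) ≠ 0 := by
    have hr0 : r ≠ 0 := fun h => by simp [h] at hm
    have := Polynomial.leadingCoeff_ne_zero.mpr hr0
    rwa [leadingCoeff, hm] at this
  have hcast : ((m + 1 : ℕ) : A) ≠ 0 := by
    rw [Ne, CharP.cast_eq_zero_iff A p]
    intro hdvd
    have := Nat.le_of_dvd (by omega) hdvd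
    omega
  apply mul_ne_zero hcast hlead
  rw [Nat.choose_succ_self_right, Nat.add_sub_cancel_left, pow_one] at hcoeff
  push_cast at hcoeff ⊢
  linear_combination -hcoeff

open Polynomial in
private lemma poly_fixed_mem_adjoin {F A : Type*} [Field F] [CommRing A] [IsDomain A]
    [Algebra F A] (p : ℕ) [Fact p.Prime] [CharP A p] (hp : 2 < p)
    (ψ : Polynomial A →+* Polynomial A)
    (hX : ψ X = X - 1) (hC : ∀ a : A, ψ (C a) = C a)
    (cA : A) (hcA : Algebra.adjoin F {cA} = ⊤) :
    ∀ f : Polynomial A, ψ f = f →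
      f ∈ Algebra.adjoin F {(C cA : Polynomial A), X ^ p - X} := by
  have hppos : 0 < p := by omega
  set S := Algebra.adjoin F {(C cA : Polynomial A), X ^ p - X} with hS
  -- constants lie in S
  have hCmem : ∀ a : A, (C a : Polynomial A) ∈ S := by
    intro a
    have h1 : (C a : Polynomial A) ∈ Subalgebra.map
        ((Polynomial.CAlgHom (R := A) (A := A)).restrictScalars F) (Algebra.adjoin F {cA}) := by
      rw [hcA]
      exact ⟨a, Algebra.mem_top, rfl⟩
    rw [AlgHom.map_adjoin, Set.image_singleton] at h1
    have h2 : Algebra.adjoin F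
        {(((Polynomial.CAlgHom (R := A) (A := A)).restrictScalars F) cA)} ≤ S :=
      Algebra.adjoin_mono (by intro x hx; rw [Set.mem_singleton_iff] at hx; subst hx; left; rfl)
    exact h2 h1
  set g : Polynomial A := X ^ p - X with hgdef
  have hgmono : g.Monic := by
    apply monic_X_pow_sub
    rw [degree_X]
    exact_mod_cast (by omega : 1 < p)
  have hgdeg : g.degree = (p : WithBot ℕ) := by
    rw [hgdef, degree_sub_eq_left_of_degree_lt, degree_X_pow]
    rw [degree_X_pow, degree_X]
    exact_mod_cast (by omega : 1 < p)
  have hgnatdeg : g.natDegree = p := natDegree_eq_of_degree_eq_some hgdeg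
  have hgne : g ≠ 0 := hgmono.ne_zero
  have hψg : ψ g = g := by
    rw [hgdef, map_sub, map_pow, hX, sub_pow_char]
    ring
  have hgS : g ∈ S := Algebra.subset_adjoin (by right; rfl)
  suffices H : ∀ n : ℕ, ∀ f : Polynomial A, f.natDegree ≤ n → ψ f = f → f ∈ S by
    intro f hf; exact H f.natDegree f le_rfl hf
  intro n
  induction n using Nat.strong_induction_on with
  | _ n ih =>
    intro f hdeg hfix
    set r : Polynomial A := f %ₘ g with hrdef
    set q : Polynomial A := f /ₘ g with hqdef
    have key : f = g * q + r := by
      have := modByMonic_add_div f g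
      rw [← this]; ring
    have hrlt : r.degree < (p : WithBot ℕ) := hgdeg ▸ degree_modByMonic_lt f hgmono
    have hrnat : r.natDegree < p := by
      rcases eq_or_ne r 0 with h | h
      · simpa [h] using hppos
      · exact_mod_cast (degree_eq_natDegree h ▸ hrlt)
    have hψrlt : (ψ r).degree < (p : WithBot ℕ) := by
      rcases eq_or_ne (ψ r) 0 with h | h
      · rw [h, degree_zero]; exact WithBot.bot_lt_coe p
      · rw [degree_eq_natDegree h]
        exact_mod_cast lt_of_le_of_lt (psi_natDegree_le ψ hX hC r) hrnat
    -- uniqueness: ψ q = q and ψ r = r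
    have key2 : f = g * ψ q + ψ r := by
      conv_lhs => rw [← hfix, key]
      rw [map_add, map_mul, hψg]
    have hq : ψ q = q := by
      by_contra hne
      have hsub : q - ψ q ≠ 0 := sub_ne_zero_of_ne (Ne.symm hne)
      have hdiff : g * (q - ψ q) = ψ r - r := by
        have h12 := key.symm.trans key2
        linear_combination h12
      have h1 : (p : WithBot ℕ) ≤ (g * (q - ψ q)).degree := by
        rw [degree_mul, hgdeg, degree_eq_natDegree hsub]
        exact le_add_of_nonneg_right (by exact_mod_cast Nat.zero_le _)
      have h2 : (ψ r - r).degree < (p : WithBot ℕ) :=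
        lt_of_le_of_lt (degree_sub_le _ _) (max_lt hψrlt hrlt)
      rw [hdiff] at h1
      exact absurd (lt_of_le_of_lt h1 h2) (lt_irrefl _)
    have hr : ψ r = r := by
      have h12 := key.symm.trans key2
      rw [hq] at h12
      linear_combination -h12
    have hrnat0 : r.natDegree = 0 := fixed_small_natDegree ψ hX hC r hr hrnat
    have hrS : r ∈ S := by
      rw [eq_C_of_natDegree_eq_zero hrnat0]
      exact hCmem _
    rcases eq_or_ne q 0 with hq0 | hq0
    · rw [key, hq0, mul_zero, zero_add]
      exact hrS
    · -- q is fixed and has smaller degree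
      have hfne : f ≠ 0 := by
        intro h
        rw [h] at key
        have : g * q = -r := by linear_combination -key
        have hd : (g * q).degree = (-r).degree := by rw [this]
        rw [degree_mul, hgdeg, degree_neg, degree_eq_natDegree hq0] at hd
        have : (p : WithBot ℕ) ≤ r.degree := by
          rw [← hd]
          exact le_add_of_nonneg_right (by exact_mod_cast Nat.zero_le _)
        exact absurd (lt_of_le_of_lt this hrlt) (lt_irrefl _)
      have hfd : f.natDegree = p + q.natDegree := by
        have hgq : (g * q).degree = (p : WithBot ℕ) + q.natDegree := by
          rw [degree_mul, hgdeg, degree_eq_natDegree hq0]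
        have : f.degree = (g * q).degree := by
          rw [key]
          apply degree_add_eq_left_of_degree_lt
          rw [hgq]
          exact lt_of_lt_of_le hrlt (by
            exact le_add_of_nonneg_right (by exact_mod_cast Nat.zero_le _))
        have hfdeg : f.degree = ((p + q.natDegree : ℕ) : WithBot ℕ) := by
          rw [this, hgq]; push_cast; rfl
        exact natDegree_eq_of_degree_eq_some hfdeg
      have hqlt : q.natDegree < n := by omega
      have hqS : q ∈ S := ih q.natDegree hqlt q le_rfl hq
      rw [key]
      exact add_mem (mul_mem hgS hqS) hrS

open MvPolynomial in
/-- Let `F` have characteristic `p > 2`, `R = F[h, c]` (with `h = X 0`,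
`c = X 1`), and `φ` the `F`-algebra automorphism with `φ(h) = h − 1`, `φ(c) = c`.  Then
the `φ`-fixed subalgebra is the `F`-subalgebra generated by `c` and `h^p − h`, and every
`φ`-stable ideal `J` of `R` is generated, as an ideal of `R`, by its `φ`-fixed elements. -/
theorem stmt_14 {F : Type*} [Field F] (p : ℕ) [Fact p.Prime] [CharP F p] (hp : 2 < p)
    (φ : MvPolynomial (Fin 2) F ≃ₐ[F] MvPolynomial (Fin 2) F)
    (hφh : φ (MvPolynomial.X 0) = MvPolynomial.X 0 - 1)
    (hφc : φ (MvPolynomial.X 1) = MvPolynomial.X 1) :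
    ({r : MvPolynomial (Fin 2) F | φ r = r} =
      ↑(Algebra.adjoin F {(MvPolynomial.X 1 : MvPolynomial (Fin 2) F),
          MvPolynomial.X 0 ^ p - MvPolynomial.X 0})) ∧
    (∀ J : Ideal (MvPolynomial (Fin 2) F), (∀ f ∈ J, φ f ∈ J) →
      J = Ideal.span {f : MvPolynomial (Fin 2) F | f ∈ J ∧ φ f = f}) := by
  classical
  have hppos : 0 < p := by omega
  set R := MvPolynomial (Fin 2) F with hR
  -- powers of φ on the generators
  have hpowh : ∀ k : ℕ, (φ ^ k) (X 0 : R) = X 0 - (k : R) := by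
    intro k
    induction k with
    | zero => rw [pow_zero, AlgEquiv.one_apply, Nat.cast_zero, sub_zero]
    | succ k ihk =>
      rw [pow_succ, AlgEquiv.mul_apply, hφh, map_sub, map_one, ihk]
      push_cast; ring
  have hpowc : ∀ k : ℕ, (φ ^ k) (X 1 : R) = X 1 := by
    intro k
    induction k with
    | zero => rw [pow_zero, AlgEquiv.one_apply]
    | succ k ihk => rw [pow_succ, AlgEquiv.mul_apply, hφc, ihk]
  -- any algebra endomorphism fixing the generators is the identity
  have hfixaux : ∀ (σ : R →ₐ[F] R), σ (X 0) = X 0 → σ (X 1) = X 1 → ∀ f : R, σ f = f := by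
    intro σ h0 h1 f
    have hle : Algebra.adjoin F (Set.range (X : Fin 2 → R)) ≤
        AlgHom.equalizer σ (AlgHom.id F R) := by
      apply Algebra.adjoin_le
      rintro x ⟨i, rfl⟩
      fin_cases i
      · exact h0
      · exact h1
    rw [MvPolynomial.adjoin_range_X] at hle
    exact hle (Algebra.mem_top : f ∈ ⊤)
  have hφp : ∀ f : R, (φ ^ p) f = f := by
    intro f
    refine hfixaux (φ ^ p).toAlgHom ?_ (hpowc p) f
    rw [AlgEquiv.toAlgHom_eq_coe, AlgEquiv.coe_algHom, hpowh p, CharP.cast_eq_zero R p, sub_zero]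
  -- the trace operator
  set Tr : R → R := fun g => ∑ k ∈ Finset.range p, (φ ^ k) g with hTr
  have hTrfix : ∀ g : R, φ (Tr g) = Tr g := by
    intro g
    have step : φ (Tr g) = ∑ k ∈ Finset.range p, (φ ^ (k + 1)) g := by
      rw [hTr, map_sum]
      refine Finset.sum_congr rfl fun k _ => ?_
      rw [pow_succ', AlgEquiv.mul_apply]
    have e1 := Finset.sum_range_succ' (fun k => (φ ^ k) g) p
    have e2 := Finset.sum_range_succ (fun k => (φ ^ k) g) p
    have e3 : (φ ^ p) g = (φ ^ 0) g := by rw [pow_zero, AlgEquiv.one_apply, hφp]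
    rw [step, hTr]
    have h12 := e1.symm.trans e2
    try simp only at h12
    linear_combination h12 + e3
  have hpowmem : ∀ (J : Ideal R), (∀ f ∈ J, φ f ∈ J) → ∀ g ∈ J, ∀ k : ℕ, (φ ^ k) g ∈ J := by
    intro J hJ g hg k
    induction k with
    | zero => rw [pow_zero, AlgEquiv.one_apply]; exact hg
    | succ k ihk => rw [pow_succ', AlgEquiv.mul_apply]; exact hJ _ ihk
  have hTrJmem : ∀ (J : Ideal R), (∀ f ∈ J, φ f ∈ J) → ∀ g ∈ J, Tr g ∈ J := by
    intro J hJ g hg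
    exact Ideal.sum_mem _ fun k _ => hpowmem J hJ g hg k
  -- the geometric sum identity
  have hgeom : ∀ k : ℕ, 0 < k → k < p →
      (∑ i ∈ Finset.range p, (X 0 : R) ^ i * (X 0 - (k : R)) ^ (p - 1 - i)) = 1 := by
    intro k hk0 hkp
    have hkne : ((k : ℕ) : R) ≠ 0 := by
      rw [Ne, CharP.cast_eq_zero_iff R p]
      intro hdvd
      have := Nat.le_of_dvd hk0 hdvd
      omega
    have hfrob : ((k : ℕ) : R) ^ p = ((k : ℕ) : R) := by
      have := map_natCast (frobenius R p) k
      rwa [frobenius_def] at this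
    have hG := geom_sum₂_mul (X 0 : R) (X 0 - (k : R)) p
    rw [sub_sub_cancel, sub_pow_char, hfrob] at hG
    apply mul_right_cancel₀ hkne
    rw [one_mul, hG]
    ring
  -- the master identity
  have hmaster : ∀ r : R,
      r = Tr r - ∑ i ∈ Finset.range p, (X 0 : R) ^ i * Tr ((X 0 : R) ^ (p - 1 - i) * r) := by
    intro r
    obtain ⟨m, hm⟩ : ∃ m, p = m + 1 := ⟨p - 1, by omega⟩
    set T : ℕ → R := fun k =>
      (∑ i ∈ Finset.range p, (X 0 : R) ^ i * (X 0 - (k : R)) ^ (p - 1 - i)) * (φ ^ k) r with hT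
    have hswap : (∑ i ∈ Finset.range p, (X 0 : R) ^ i * Tr ((X 0 : R) ^ (p - 1 - i) * r))
        = ∑ k ∈ Finset.range p, T k := by
      simp only [hT, hTr]
      have h1 : ∀ i ∈ Finset.range p, (X 0 : R) ^ i *
          (∑ k ∈ Finset.range p, (φ ^ k) ((X 0 : R) ^ (p - 1 - i) * r))
          = ∑ k ∈ Finset.range p, (X 0 : R) ^ i * ((X 0 - (k : R)) ^ (p - 1 - i) * (φ ^ k) r) := by
        intro i _
        rw [Finset.mul_sum]
        refine Finset.sum_congr rfl fun k _ => ?_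
        rw [map_mul, map_pow, hpowh]
      rw [Finset.sum_congr rfl h1, Finset.sum_comm]
      refine Finset.sum_congr rfl fun k _ => ?_
      rw [Finset.sum_mul]
      refine Finset.sum_congr rfl fun i _ => by ring
    have hT0 : T 0 = 0 := by
      rw [hT]
      simp only [Nat.cast_zero, sub_zero]
      have h2 : ∀ i ∈ Finset.range p, (X 0 : R) ^ i * (X 0 : R) ^ (p - 1 - i) = (X 0 : R) ^ (p - 1) := by
        intro i hi
        rw [← pow_add]
        congr 1
        have := Finset.mem_range.mp hi
        omega
      rw [Finset.sum_congr rfl h2, Finset.sum_const, Finset.card_range, nsmul_eq_mul,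
        CharP.cast_eq_zero R p, zero_mul, zero_mul]
    have hTk : ∀ k ∈ Finset.range m, T (k + 1) = (φ ^ (k + 1)) r := by
      intro k hk
      rw [hT]
      simp only
      rw [Nat.cast_add, Nat.cast_one]
      have hg := hgeom (k + 1) (by omega) (by have := Finset.mem_range.mp hk; omega)
      rw [Nat.cast_add, Nat.cast_one] at hg
      rw [hg, one_mul]
    have e1 : ∑ k ∈ Finset.range p, T k = ∑ k ∈ Finset.range m, T (k + 1) + T 0 := by
      rw [hm]
      exact Finset.sum_range_succ' T m
    have e2 : ∑ k ∈ Finset.range p, (φ ^ k) r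
        = ∑ k ∈ Finset.range m, (φ ^ (k + 1)) r + (φ ^ 0) r := by
      rw [hm]
      exact Finset.sum_range_succ' (fun k => (φ ^ k) r) m
    rw [hswap, e1, Finset.sum_congr rfl hTk, hT0, add_zero, hTr]
    simp only
    rw [e2, pow_zero, AlgEquiv.one_apply]
    ring
  -- Part 2
  have part2 : ∀ J : Ideal R, (∀ f ∈ J, φ f ∈ J) →
      J = Ideal.span {f : R | f ∈ J ∧ φ f = f} := by
    intro J hJ
    apply le_antisymm
    · intro f hf
      have hTrf : ∀ g ∈ J, Tr g ∈ Ideal.span {f : R | f ∈ J ∧ φ f = f} := by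
        intro g hg
        exact Ideal.subset_span ⟨hTrJmem J hJ g hg, hTrfix g⟩
      rw [hmaster f]
      refine sub_mem (hTrf f hf) ?_
      refine Ideal.sum_mem _ fun i _ => ?_
      exact Ideal.mul_mem_left _ _ (hTrf _ (J.mul_mem_left _ hf))
    · rw [Ideal.span_le]
      rintro f ⟨hf, -⟩
      exact hf
  refine ⟨?_, part2⟩
  -- Part 1
  ext r
  simp only [Set.mem_setOf_eq, SetLike.mem_coe]
  constructor
  · intro hfix
    set A := MvPolynomial (Fin 1) F with hA
    set e : R ≃ₐ[F] Polynomial A := MvPolynomial.finSuccEquiv F 1 with he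
    set ν : A →ₐ[F] R :=
      (e.symm.toAlgHom).comp ((Polynomial.CAlgHom (R := A) (A := A)).restrictScalars F) with hν
    have hνapp : ∀ a : A, ν a = e.symm (Polynomial.C a) := fun a => rfl
    have hνX : ν (X 0) = (X 1 : R) := by
      rw [hνapp, ← MvPolynomial.finSuccEquiv_X_succ (j := (0 : Fin 1)),
        AlgEquiv.symm_apply_apply, Fin.succ_zero_eq_one]
    have hφν : ∀ a : A, φ (ν a) = ν a := by
      intro a
      have hmem : ν a ∈ Subalgebra.map ν ⊤ := ⟨a, Algebra.mem_top, rfl⟩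
      have hle : Subalgebra.map ν ⊤ ≤ AlgHom.equalizer φ.toAlgHom (AlgHom.id F R) := by
        rw [← MvPolynomial.adjoin_range_X, AlgHom.map_adjoin]
        apply Algebra.adjoin_le
        rintro x ⟨y, ⟨i, rfl⟩, rfl⟩
        rw [Subsingleton.elim i 0]
        show φ (ν (X 0)) = ν (X 0)
        rw [hνX, hφc]
      exact hle hmem
    set ψ : Polynomial A →+* Polynomial A := ((e.symm.trans (φ.trans e)).toAlgHom : Polynomial A →ₐ[F] Polynomial A).toRingHom with hψ
    have hψapp : ∀ x, ψ x = e (φ (e.symm x)) := fun x => rfl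
    have hψX : ψ Polynomial.X = Polynomial.X - 1 := by
      rw [hψapp, show (Polynomial.X : Polynomial A) = e (X 0) from
          (MvPolynomial.finSuccEquiv_X_zero).symm,
        AlgEquiv.symm_apply_apply, hφh, map_sub, map_one, MvPolynomial.finSuccEquiv_X_zero]
    have hψC : ∀ a : A, ψ (Polynomial.C a) = Polynomial.C a := by
      intro a
      rw [hψapp, ← hνapp, hφν, hνapp, AlgEquiv.apply_symm_apply]
    have hcA : Algebra.adjoin F {(X 0 : A)} = ⊤ := by
      have hr : Set.range (X : Fin 1 → A) = {(X 0 : A)} := by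
        rw [Set.range_unique]
        rfl
      rw [← hr, MvPolynomial.adjoin_range_X]
    have hfix' : ψ (e r) = e r := by rw [hψapp, AlgEquiv.symm_apply_apply, hfix]
    have hmem := poly_fixed_mem_adjoin (F := F) p hp ψ hψX hψC (X 0 : A) hcA (e r) hfix'
    have hsymX : e.symm (Polynomial.X : Polynomial A) = (X 0 : R) := by
      rw [show (Polynomial.X : Polynomial A) = e (X 0) from (MvPolynomial.finSuccEquiv_X_zero).symm,
        AlgEquiv.symm_apply_apply]
    have hmap : Subalgebra.map e.symm.toAlgHom
        (Algebra.adjoin F {(Polynomial.C (X 0 : A) : Polynomial A),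
          Polynomial.X ^ p - Polynomial.X})
        = Algebra.adjoin F {(X 1 : R), (X 0 : R) ^ p - X 0} := by
      rw [AlgHom.map_adjoin, Set.image_pair]
      have h1 : e.symm.toAlgHom (Polynomial.C (X 0 : A)) = (X 1 : R) := by
        show e.symm (Polynomial.C (X 0 : A)) = (X 1 : R)
        rw [← hνapp, hνX]
      have h2 : e.symm.toAlgHom (Polynomial.X ^ p - Polynomial.X) = (X 0 : R) ^ p - X 0 := by
        show e.symm (Polynomial.X ^ p - Polynomial.X) = (X 0 : R) ^ p - X 0
        rw [map_sub, map_pow, hsymX]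
      rw [h1, h2]
    have hr : r ∈ Subalgebra.map e.symm.toAlgHom
        (Algebra.adjoin F {(Polynomial.C (X 0 : A) : Polynomial A),
          Polynomial.X ^ p - Polynomial.X}) :=
      ⟨e r, hmem, e.symm_apply_apply r⟩
    rw [hmap] at hr
    exact hr
  · intro hr
    have hle : Algebra.adjoin F {(X 1 : R), (X 0 : R) ^ p - X 0} ≤
        AlgHom.equalizer φ.toAlgHom (AlgHom.id F R) := by
      apply Algebra.adjoin_le
      rintro x (rfl | rfl)
      · exact hφc
      · show φ ((X 0 : R) ^ p - X 0) = (X 0 : R) ^ p - X 0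
        rw [map_sub, map_pow, hφh, sub_pow_char]
        ring
    exact hle hr
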